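/- Let f, g : ℂ^n → ℂ^n be differentiable maps (for instance polynomial maps) with f ∘ g = g ∘ f. Let P ∈ ℂ^n be a periodic point of f of exact period l, suppose g(P) is a periodic point of f of exact period l', and suppose P is not a critical point of g, i.e., det D(g)(P) ≠ 0. Then l' divides l and det D(f^l)(P) = (det D(f^{l'})(g(P)))^{l/l'}. -/

import Mathlib

lemma clm_det_comp {n : ℕ} (A B : (Fin n → ℂ) →L[ℂ] (Fin n → ℂ)) :
    (A.comp B).det = A.det * B.det := by
  simp [ContinuousLinearMap.det, ContinuousLinearMap.coe_comp, LinearMap.det_comp]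

lemma det_fderiv_iterate {n : ℕ} (h : (Fin n → ℂ) → (Fin n → ℂ))
    (hh : Differentiable ℂ h) (Q : Fin n → ℂ) (hQ : h Q = Q) (k : ℕ) :
    (fderiv ℂ (h^[k]) Q).det = (fderiv ℂ h Q).det ^ k := by
  induction k with
  | zero => simp [ContinuousLinearMap.det]
  | succ k ih =>
    rw [Function.iterate_succ,
      fderiv_comp Q ((hh.iterate k).differentiableAt) hh.differentiableAt, hQ,
      clm_det_comp, ih, pow_succ]

theorem multiplier_of_commuting {n : ℕ} (f g : (Fin n → ℂ) → (Fin n → ℂ))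
    (hf : Differentiable ℂ f) (hg : Differentiable ℂ g)
    (hcomm : f ∘ g = g ∘ f)
    (P : Fin n → ℂ) (l l' : ℕ) (hl : 1 ≤ l) (hl' : 1 ≤ l')
    (hPl : f^[l] P = P) (hPexact : ∀ k : ℕ, 1 ≤ k → k < l → f^[k] P ≠ P)
    (hgPl : f^[l'] (g P) = g P) (hgPexact : ∀ k : ℕ, 1 ≤ k → k < l' → f^[k] (g P) ≠ g P)
    (hcrit : (fderiv ℂ g P).det ≠ 0) :
    l' ∣ l ∧ (fderiv ℂ (f^[l]) P).det = ((fderiv ℂ (f^[l']) (g P)).det) ^ (l / l') := by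
  have hcomm' : ∀ m x, g (f^[m] x) = f^[m] (g x) := by
    intro m x
    have : Function.Commute f g := funext_iff.mp hcomm
    exact (this.iterate_left m x).symm
  -- g P is a periodic point of f with period l
  have hgPlper : f^[l] (g P) = g P := by rw [← hcomm' l P, hPl]
  -- minimal period of g P is l'
  have hmin : Function.minimalPeriod f (g P) = l' := by
    have hper : Function.IsPeriodicPt f l' (g P) := hgPl
    have h1 : Function.minimalPeriod f (g P) ≤ l' := hper.minimalPeriod_le hl'
    rcases lt_or_eq_of_le h1 with h | h
    · exact absurd (Function.isPeriodicPt_minimalPeriod f (g P))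
        (hgPexact _ (hper.minimalPeriod_pos hl') h)
    · exact h
  have hdvd : l' ∣ l := by
    rw [← hmin]
    exact Function.IsPeriodicPt.minimalPeriod_dvd hgPlper
  refine ⟨hdvd, ?_⟩
  -- chain rule on g ∘ f^[l] = f^[l] ∘ g
  have heq : fderiv ℂ (g ∘ f^[l]) P = fderiv ℂ (f^[l] ∘ g) P := by
    congr 1
    funext x
    simpa using hcomm' l x
  rw [fderiv_comp P (hg.differentiableAt) ((hf.iterate l).differentiableAt),
      fderiv_comp P ((hf.iterate l).differentiableAt) (hg.differentiableAt), hPl] at heq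
  have hdet : (fderiv ℂ g P).det * (fderiv ℂ (f^[l]) P).det
      = (fderiv ℂ (f^[l]) (g P)).det * (fderiv ℂ g P).det := by
    rw [← clm_det_comp, ← clm_det_comp, heq]
  have key : (fderiv ℂ (f^[l]) P).det = (fderiv ℂ (f^[l]) (g P)).det :=
    mul_left_cancel₀ hcrit (by rw [hdet]; ring)
  rw [key]
  obtain ⟨q, hq⟩ := hdvd
  have hql : l / l' = q := by rw [hq]; exact Nat.mul_div_cancel_left q (by omega)
  rw [hql, hq, Function.iterate_mul]
  exact det_fderiv_iterate (f^[l']) (hf.iterate l') (g P) hgPl q
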